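/- Suppose Assumption (A) holds and α ∈ (0,1). Then the origin of the closed-loop system is locally exponentially stable: there exist constants ρ > 0, C > 0 and σ > 0 such that every continuously differentiable x = (x1,x2) : [0,∞) → ℝ² satisfying x1'(t) = b(g(x2(t))−1) + D*·g(x2(t))(1−e^{x1(t)}) and x2'(t) = p(x2(t))(D(x(t)) − D*·g(x2(t))·e^{x1(t)}) for all t ≥ 0 with ‖x(0)‖ ≤ ρ satisfies ‖x(t)‖ ≤ C·e^{−σt}·‖x(0)‖ for all t ≥ 0. -/

import Mathlib

lemma aux_hasDerivAt_fst {x : ℝ → ℝ × ℝ} {v : ℝ × ℝ} {t : ℝ} (h : HasDerivAt x v t) :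
    HasDerivAt (fun s => (x s).1) v.1 t := by
  simpa using h.hasFDerivAt.fst.hasDerivAt

lemma aux_hasDerivAt_snd {x : ℝ → ℝ × ℝ} {v : ℝ × ℝ} {t : ℝ} (h : HasDerivAt x v t) :
    HasDerivAt (fun s => (x s).2) v.2 t := by
  simpa using h.hasFDerivAt.snd.hasDerivAt

lemma aux_exp_lower {u : ℝ} (hu : |u| ≤ 1) :
    (1 - Real.exp (-1)) * u ^ 2 ≤ u * (1 - Real.exp (-u)) := by
  rw [abs_le] at hu
  rcases le_or_gt 0 u with h | h
  · have key : Real.exp (-u) ≤ 1 - (1 - Real.exp (-1)) * u := by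
      have := convexOn_exp.2 (Set.mem_univ (0:ℝ)) (Set.mem_univ (-1:ℝ))
        (by linarith : (0:ℝ) ≤ 1 - u) (by linarith : (0:ℝ) ≤ u) (by ring)
      simp only [smul_eq_mul, Real.exp_zero] at this
      calc Real.exp (-u) = Real.exp ((1-u) * 0 + u * (-1)) := by ring_nf
        _ ≤ (1-u) * 1 + u * Real.exp (-1) := this
        _ = 1 - (1 - Real.exp (-1)) * u := by ring
    nlinarith
  · have key : 1 + (-u) ≤ Real.exp (-u) := by linarith [Real.add_one_le_exp (-u)]
    have hc : Real.exp (-1) ≥ 0 := (Real.exp_pos _).le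
    nlinarith

lemma aux_exp_upper {u : ℝ} (hu : |u| ≤ 1) :
    u * (1 - Real.exp u) ≤ -((1 - Real.exp (-1)) * u ^ 2) := by
  have := aux_exp_lower (u := -u) (by rwa [abs_neg])
  simp only [neg_neg] at this
  nlinarith [this]

lemma aux_le_of_sq_le_sq {a b : ℝ} (h : a ^ 2 ≤ b ^ 2) (ha : 0 ≤ a) (hb : 0 ≤ b) : a ≤ b := by
  nlinarith

lemma aux_abs_le {a r : ℝ} (h : a ^ 2 ≤ r ^ 2) (hr : 0 ≤ r) : |a| ≤ r :=
  aux_le_of_sq_le_sq (by rwa [sq_abs]) (abs_nonneg a) hr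

set_option maxHeartbeats 2000000 in
/-- Under Assumption (A) and α ∈ (0,1), the origin of the closed-loop
system is locally exponentially stable. -/
theorem stmt_2
    (S_in Sstar p0 b Dstar : ℝ) (μ : ℝ → ℝ)
    (hSin : 0 < S_in) (hSstar : Sstar ∈ Set.Ioo 0 S_in)
    (hp0 : 0 < p0) (hb : 0 ≤ b) (hDstar : 0 < Dstar)
    (hμ_bdd : BddAbove (Set.range μ))
    (hμ_C1 : ContDiffOn ℝ 1 μ (Set.Ici 0))
    (hμ_nonneg : ∀ S, 0 ≤ S → 0 ≤ μ S)
    (hμ_zero : μ 0 = 0) (hμ_pos : ∀ S, 0 < S → 0 < μ S)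
    (heq : p0 * μ Sstar = b + Dstar)
    (κ : ℝ) (hκ : κ = (S_in - Sstar) / Sstar)
    (p g : ℝ → ℝ)
    (hp : ∀ z, p z = κ * Real.exp (-z) + 1)
    (hg : ∀ z, g z = μ (S_in / p z) / μ Sstar)
    -- Assumption (A)
    (hA : ∀ S ∈ Set.Icc Sstar S_in, b < p0 * μ S)
    (δ α : ℝ) (hδ : 0 < δ) (hα : α ∈ Set.Ioo (0 : ℝ) 1)
    -- feedback law
    (D : ℝ × ℝ → ℝ)
    (hD : ∀ x : ℝ × ℝ, D x =
      (κ + 1) * Dstar * g x.2 * Real.exp (x.1 - x.2) / p x.2 +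
        (if x.2 ≤ 0 then δ * b * |g x.2 - 1| ^ (1 + α) else 0))
    -- closed-loop vector field
    (F : ℝ × ℝ → ℝ × ℝ)
    (hF : ∀ x : ℝ × ℝ, F x =
      (b * (g x.2 - 1) + Dstar * g x.2 * (1 - Real.exp x.1),
       p x.2 * (D x - Dstar * g x.2 * Real.exp x.1))) :
    ∃ ρ > (0 : ℝ), ∃ C > (0 : ℝ), ∃ σ > (0 : ℝ), ∀ x : ℝ → ℝ × ℝ,
      (∀ t, 0 ≤ t → HasDerivAt x (F (x t)) t) → ‖x 0‖ ≤ ρ →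
      ∀ t, 0 ≤ t → ‖x t‖ ≤ C * Real.exp (-σ * t) * ‖x 0‖ := by
  obtain ⟨hS0, hSlt⟩ := hSstar
  have hμS : 0 < μ Sstar := hμ_pos _ hS0
  have hκpos : 0 < κ := by rw [hκ]; exact div_pos (by linarith) hS0
  have hpge : ∀ z, 1 ≤ p z := by
    intro z; rw [hp]
    have h1 := mul_nonneg hκpos.le (Real.exp_pos (-z)).le
    linarith only [h1]
  have hκ1 : κ + 1 = S_in / Sstar := by rw [hκ]; field_simp; ring
  have hval : S_in / (κ * Real.exp (-(0:ℝ)) + 1) = Sstar := by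
    rw [neg_zero, Real.exp_zero, mul_one, hκ1]
    field_simp
  have hg0 : g 0 = 1 := by
    have : S_in / p 0 = Sstar := by rw [hp]; exact hval
    rw [hg, this, div_self hμS.ne']
  -- g is C¹ at 0
  have hgeq : g = fun z => μ (S_in / (κ * Real.exp (-z) + 1)) / μ Sstar := by
    funext z; rw [hg, hp]
  have hinner : ContDiff ℝ 1 (fun z : ℝ => S_in / (κ * Real.exp (-z) + 1)) := by
    apply ContDiff.div contDiff_const
    · exact (contDiff_const.mul (Real.contDiff_exp.comp contDiff_neg)).add contDiff_const
    · intro z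
      have := hpge z; rw [hp] at this; intro hzero; rw [hzero] at this; linarith
  have hμat : ContDiffAt ℝ 1 μ Sstar := hμ_C1.contDiffAt (Ici_mem_nhds hS0)
  have hgC1 : ContDiffAt ℝ 1 g 0 := by
    rw [hgeq]
    have hcomp : ContDiffAt ℝ 1 (fun z : ℝ => μ (S_in / (κ * Real.exp (-z) + 1))) 0 := by
      have := ContDiffAt.comp (0:ℝ) (hval ▸ hμat) hinner.contDiffAt
      exact this
    exact hcomp.div_const _
  -- local Lipschitz bound for g at 0
  obtain ⟨L0, U, hU, hLip⟩ := hgC1.exists_lipschitzOnWith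
  obtain ⟨r0, hr0, hball⟩ := Metric.mem_nhds_iff.1 hU
  obtain ⟨L, hLdef⟩ : ∃ L : ℝ, L = max (L0 : ℝ) 1 := ⟨_, rfl⟩
  have hL1 : (1:ℝ) ≤ L := by rw [hLdef]; exact le_max_right _ _
  have hLpos : (0:ℝ) < L := lt_of_lt_of_le one_pos hL1
  have hglip : ∀ z : ℝ, |z| < r0 → |g z - 1| ≤ L * |z| := by
    intro z hz
    have h1 : z ∈ U := hball (by simpa [Metric.mem_ball, Real.dist_eq] using hz)
    have h2 : (0:ℝ) ∈ U := hball (Metric.mem_ball_self hr0)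
    have hd := hLip.dist_le_mul z h1 0 h2
    rw [Real.dist_eq, Real.dist_eq, hg0, sub_zero] at hd
    calc |g z - 1| ≤ (L0 : ℝ) * |z| := hd
      _ ≤ L * |z| := by
          apply mul_le_mul_of_nonneg_right _ (abs_nonneg z)
          rw [hLdef]; exact le_max_left _ _
  -- constants
  obtain ⟨c, hcdef⟩ : ∃ c : ℝ, c = 1 - Real.exp (-1) := ⟨_, rfl⟩
  have hcpos : 0 < c := by
    have : Real.exp (-1) < Real.exp 0 := Real.exp_lt_exp.2 (by norm_num)
    rw [Real.exp_zero] at this; rw [hcdef]; linarith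
  obtain ⟨c3, hc3def⟩ : ∃ c3 : ℝ, c3 = Dstar * c / 2 := ⟨_, rfl⟩
  obtain ⟨c2, hc2def⟩ : ∃ c2 : ℝ, c2 = Dstar * Real.exp (-1) * c / 2 := ⟨_, rfl⟩
  have hc3 : 0 < c3 := by rw [hc3def]; positivity
  have hc2 : 0 < c2 := by rw [hc2def]; have := Real.exp_pos (-1); positivity
  obtain ⟨K, hKdef⟩ : ∃ K : ℝ, K = max 1 ((b*L)^2 / (c3 * c2)) := ⟨_, rfl⟩
  have hK1 : (1:ℝ) ≤ K := by rw [hKdef]; exact le_max_left _ _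
  have hKbl : (b*L)^2 ≤ K * (c2 * c3) := by
    have h := le_max_right (1:ℝ) ((b*L)^2 / (c3 * c2))
    rw [div_le_iff₀ (by positivity)] at h
    calc (b*L)^2 ≤ max 1 ((b*L)^2 / (c3 * c2)) * (c3 * c2) := h
      _ = K * (c2 * c3) := by rw [hKdef]; ring
  obtain ⟨lam, hlamdef⟩ : ∃ lam : ℝ, lam = min c3 c2 := ⟨_, rfl⟩
  have hlam : 0 < lam := by rw [hlamdef]; exact lt_min hc3 hc2
  have hlamc3 : lam ≤ c3 := by rw [hlamdef]; exact min_le_left _ _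
  have hlamc2 : lam ≤ c2 := by rw [hlamdef]; exact min_le_right _ _
  obtain ⟨r, hrdef⟩ : ∃ r : ℝ, r = min (r0/2) (1/(2*L)) := ⟨_, rfl⟩
  have hrpos : 0 < r := by rw [hrdef]; exact lt_min (by linarith) (by positivity)
  have hrr0 : r < r0 := by rw [hrdef]; exact lt_of_le_of_lt (min_le_left _ _) (by linarith)
  have hrL : L * r ≤ 1/2 := by
    have h : r ≤ 1/(2*L) := by rw [hrdef]; exact min_le_right _ _
    rw [le_div_iff₀ (by positivity)] at h
    linarith
  have hr1 : r ≤ 1 := by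
    have h1 : 1 * r ≤ L * r := mul_le_mul_of_nonneg_right hL1 hrpos.le
    linarith only [h1, hrL, hrpos]
  -- core Lyapunov derivative estimate
  have hcore : ∀ w : ℝ × ℝ, |w.1| ≤ r → |w.2| ≤ r →
      2 * (w.1 * (F w).1) + 2 * K * (w.2 * (F w).2) ≤ -lam * (w.1^2 + K * w.2^2) := by
    intro w h1 h2
    obtain ⟨x1, x2⟩ := w
    simp only at h1 h2 ⊢
    have hx1le1 : |x1| ≤ 1 := h1.trans hr1
    have hx2le1 : |x2| ≤ 1 := h2.trans hr1
    have hgb : |g x2 - 1| ≤ L * |x2| := hglip x2 (lt_of_le_of_lt h2 hrr0)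
    have hgbr : |g x2 - 1| ≤ 1/2 := by
      calc |g x2 - 1| ≤ L * |x2| := hgb
        _ ≤ L * r := by apply mul_le_mul_of_nonneg_left h2 hLpos.le
        _ ≤ 1/2 := hrL
    have hghalf : 1/2 ≤ g x2 := by
      have := abs_le.1 hgbr; linarith [this.1]
    have hF1 : (F (x1,x2)).1 = b * (g x2 - 1) + Dstar * g x2 * (1 - Real.exp x1) := by
      rw [hF]
    have hpne : Real.exp x2 ≠ 0 := (Real.exp_pos x2).ne'
    have hpne2 : κ * Real.exp (-x2) + 1 ≠ 0 := by
      have := hpge x2; rw [hp] at this; intro hz; rw [hz] at this; linarith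
    have hF2 : (F (x1,x2)).2 = Dstar * g x2 * Real.exp x1 * (Real.exp (-x2) - 1)
        + (κ * Real.exp (-x2) + 1) * (if x2 ≤ 0 then δ * b * |g x2 - 1| ^ (1+α) else 0) := by
      rw [hF, hD, hp]
      have key : ∀ (P Q Ival X R : ℝ), P ≠ 0 → Q - P * X = R →
          P * (Q / P + Ival - X) = R + P * Ival := by
        intro P Q Ival X R hP hQR
        have h1 : P * (Q / P + Ival - X) = Q / P * P + (P * Ival - P * X) := by ring
        rw [h1, div_mul_cancel₀ Q hP]
        linarith
      exact key _ _ _ _ _ hpne2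
        (by rw [show x1 - x2 = x1 + -x2 from by ring, Real.exp_add]; ring)
    have e1 : x1 * (1 - Real.exp x1) ≤ -(c * x1^2) := by
      rw [hcdef]; exact aux_exp_upper hx1le1
    have e2 : c * x2^2 ≤ x2 * (1 - Real.exp (-x2)) := by
      rw [hcdef]; exact aux_exp_lower hx2le1
    have hexp1 : Real.exp (-1) ≤ Real.exp x1 :=
      Real.exp_le_exp.2 (by linarith [(abs_le.1 hx1le1).1])
    -- first component bound
    have t1 : x1 * (F (x1,x2)).1 ≤ b * L * (|x1| * |x2|) - c3 * x1^2 := by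
      rw [hF1]
      have A : x1 * (b * (g x2 - 1)) ≤ b * L * (|x1| * |x2|) := by
        calc x1 * (b * (g x2 - 1)) ≤ |x1 * (b * (g x2 - 1))| := le_abs_self _
          _ = b * (|x1| * |g x2 - 1|) := by
              rw [abs_mul, abs_mul, abs_of_nonneg hb]; ring
          _ ≤ b * (|x1| * (L * |x2|)) := by
              apply mul_le_mul_of_nonneg_left _ hb
              exact mul_le_mul_of_nonneg_left hgb (abs_nonneg x1)
          _ = b * L * (|x1| * |x2|) := by ring
      have B : x1 * (Dstar * g x2 * (1 - Real.exp x1)) ≤ -(c3 * x1^2) := by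
        have ht0 : x1 * (1 - Real.exp x1) ≤ 0 :=
          le_trans e1 (by linarith only [mul_nonneg hcpos.le (sq_nonneg x1)])
        have step : g x2 * (x1 * (1 - Real.exp x1)) ≤ (1/2) * (x1 * (1 - Real.exp x1)) :=
          mul_le_mul_of_nonpos_right hghalf ht0
        have step2 : (1/2) * (x1 * (1 - Real.exp x1)) ≤ (1/2) * (-(c * x1^2)) := by
          linarith only [e1]
        calc x1 * (Dstar * g x2 * (1 - Real.exp x1))
            = Dstar * (g x2 * (x1 * (1 - Real.exp x1))) := by ring
          _ ≤ Dstar * ((1/2) * (-(c * x1^2))) := by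
              apply mul_le_mul_of_nonneg_left _ hDstar.le
              linarith only [step, step2]
          _ = -(c3 * x1^2) := by rw [hc3def]; ring
      have expand : x1 * (b * (g x2 - 1) + Dstar * g x2 * (1 - Real.exp x1))
          = x1 * (b * (g x2 - 1)) + x1 * (Dstar * g x2 * (1 - Real.exp x1)) := by ring
      rw [expand]; linarith only [A, B]
    -- second component bound
    have t2 : x2 * (F (x1,x2)).2 ≤ -(c2 * x2^2) := by
      rw [hF2]
      have hind : x2 * ((κ * Real.exp (-x2) + 1) *
          (if x2 ≤ 0 then δ * b * |g x2 - 1| ^ (1+α) else 0)) ≤ 0 := by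
        by_cases hx2 : x2 ≤ 0
        · rw [if_pos hx2]
          apply mul_nonpos_of_nonpos_of_nonneg hx2
          have h1 : (0:ℝ) ≤ κ * Real.exp (-x2) + 1 := by positivity
          have h2 : (0:ℝ) ≤ δ * b * |g x2 - 1| ^ (1+α) := by
            apply mul_nonneg (mul_nonneg hδ.le hb)
            exact Real.rpow_nonneg (abs_nonneg _) _
          exact mul_nonneg h1 h2
        · rw [if_neg hx2]; simp
      have hA0 : Dstar * Real.exp (-1) / 2 ≤ Dstar * g x2 * Real.exp x1 := by
        have h1 : (1/2) * Real.exp (-1) ≤ g x2 * Real.exp x1 := by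
          apply mul_le_mul hghalf hexp1 (Real.exp_pos _).le (by linarith only [hghalf])
        have h2 : Dstar * ((1/2) * Real.exp (-1)) ≤ Dstar * (g x2 * Real.exp x1) :=
          mul_le_mul_of_nonneg_left h1 hDstar.le
        linarith only [h2]
      have hs0 : 0 ≤ x2 * (1 - Real.exp (-x2)) :=
        le_trans (mul_nonneg hcpos.le (sq_nonneg x2)) e2
      have main : x2 * (Dstar * g x2 * Real.exp x1 * (Real.exp (-x2) - 1)) ≤ -(c2 * x2^2) := by
        have hA0pos : (0:ℝ) ≤ Dstar * Real.exp (-1) / 2 :=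
          (div_pos (mul_pos hDstar (Real.exp_pos (-1))) (by norm_num)).le
        have key : (Dstar * Real.exp (-1) / 2) * (c * x2^2)
            ≤ (Dstar * g x2 * Real.exp x1) * (x2 * (1 - Real.exp (-x2))) := by
          apply mul_le_mul hA0 e2 (mul_nonneg hcpos.le (sq_nonneg x2)) (le_trans hA0pos hA0)
        have expand : x2 * (Dstar * g x2 * Real.exp x1 * (Real.exp (-x2) - 1))
            = -((Dstar * g x2 * Real.exp x1) * (x2 * (1 - Real.exp (-x2)))) := by ring
        rw [expand, hc2def]
        linarith only [key]
      have expand2 : x2 * (Dstar * g x2 * Real.exp x1 * (Real.exp (-x2) - 1)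
          + (κ * Real.exp (-x2) + 1) * (if x2 ≤ 0 then δ * b * |g x2 - 1| ^ (1+α) else 0))
          = x2 * (Dstar * g x2 * Real.exp x1 * (Real.exp (-x2) - 1))
          + x2 * ((κ * Real.exp (-x2) + 1) *
            (if x2 ≤ 0 then δ * b * |g x2 - 1| ^ (1+α) else 0)) := by ring
      rw [expand2]; linarith only [main, hind]
    -- combine
    have t2K : K * (x2 * (F (x1,x2)).2) ≤ K * (-(c2 * x2^2)) :=
      mul_le_mul_of_nonneg_left t2 (by linarith only [hK1])
    have amgm : 2 * (b * L * (|x1| * |x2|)) ≤ c3 * x1^2 + c2 * (K * x2^2) := by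
      have h1 := sq_nonneg (c3 * |x1| - b * L * |x2|)
      have h2 := mul_le_mul_of_nonneg_right hKbl (sq_nonneg |x2|)
      have key : (2 * (b * L * (|x1| * |x2|))) * c3
          ≤ (c3 * |x1|^2 + c2 * (K * |x2|^2)) * c3 := by
        linarith only [h1, h2]
      have amgm' := le_of_mul_le_mul_right key hc3
      rwa [sq_abs, sq_abs] at amgm'
    have l1 : lam * x1^2 ≤ c3 * x1^2 := mul_le_mul_of_nonneg_right hlamc3 (sq_nonneg x1)
    have l2 : lam * (K * x2^2) ≤ c2 * (K * x2^2) := by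
      apply mul_le_mul_of_nonneg_right hlamc2
      exact mul_nonneg (by linarith only [hK1]) (sq_nonneg x2)
    have s1 : 2 * (x1 * (F (x1,x2)).1) ≤ 2 * (b * L * (|x1| * |x2|) - c3 * x1^2) := by
      linarith only [t1]
    have s2 : 2 * K * (x2 * (F (x1,x2)).2) ≤ 2 * (K * (-(c2 * x2^2))) := by
      linarith only [t2K]
    linarith only [s1, s2, amgm, l1, l2]
  -- setup of final constants
  obtain ⟨sq1K, hsqdef⟩ : ∃ q : ℝ, q = Real.sqrt (1 + K) := ⟨_, rfl⟩
  have h1K : (0:ℝ) < 1 + K := by linarith only [hK1]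
  have hsqpos : 0 < sq1K := by rw [hsqdef]; exact Real.sqrt_pos.2 h1K
  have hsqsq : sq1K ^ 2 = 1 + K := by rw [hsqdef]; exact Real.sq_sqrt h1K.le
  have hKpos : (0:ℝ) ≤ K := by linarith only [hK1]
  refine ⟨r / (2 * sq1K), by positivity, sq1K, hsqpos, lam / 4, by linarith only [hlam], ?_⟩
  intro x hx hx0 t ht
  obtain ⟨V, hVdef⟩ : ∃ V : ℝ → ℝ, V = fun u => (x u).1 ^ 2 + K * (x u).2 ^ 2 := ⟨_, rfl⟩
  obtain ⟨W, hWdef⟩ : ∃ W : ℝ → ℝ,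
      W = fun u => 2 * ((x u).1 * (F (x u)).1) + 2 * K * ((x u).2 * (F (x u)).2) := ⟨_, rfl⟩
  have hVhas : ∀ s : ℝ, 0 ≤ s → HasDerivAt V (W s) s := by
    intro s hs
    rw [hVdef, hWdef]
    have h1 := (aux_hasDerivAt_fst (hx s hs)).pow 2
    have h2 := ((aux_hasDerivAt_snd (hx s hs)).pow 2).const_mul K
    have h3 := h1.add h2
    refine h3.congr_deriv ?_
    beta_reduce
    push_cast
    ring
  have hVnonneg : ∀ s, 0 ≤ V s := by
    intro s; rw [hVdef]
    have h1 := sq_nonneg (x s).1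
    have h2 := mul_nonneg hKpos (sq_nonneg (x s).2)
    simp only
    linarith only [h1, h2]
  have hVlb1 : ∀ s, (x s).1 ^ 2 ≤ V s := by
    intro s; rw [hVdef]
    have h2 := mul_nonneg hKpos (sq_nonneg (x s).2)
    simp only; linarith only [h2]
  have hVlb2 : ∀ s, (x s).2 ^ 2 ≤ V s := by
    intro s; rw [hVdef]
    have h2 := mul_le_mul_of_nonneg_right hK1 (sq_nonneg (x s).2)
    have h1 := sq_nonneg (x s).1
    simp only; linarith only [h1, h2]
  -- initial value bound
  have habs1 : |(x 0).1| ≤ r / (2 * sq1K) := by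
    refine le_trans ?_ hx0
    rw [← Real.norm_eq_abs]; exact norm_fst_le (x 0)
  have habs2 : |(x 0).2| ≤ r / (2 * sq1K) := by
    refine le_trans ?_ hx0
    rw [← Real.norm_eq_abs]; exact norm_snd_le (x 0)
  have hρeq : (1 + K) * (r / (2 * sq1K)) ^ 2 = r ^ 2 / 4 := by
    rw [← hsqsq, div_pow, mul_pow]
    field_simp
    ring
  have hV0 : V 0 ≤ r ^ 2 / 4 := by
    have h1 : (x 0).1 ^ 2 ≤ (r / (2 * sq1K)) ^ 2 := by
      rw [← sq_abs]; exact pow_le_pow_left₀ (abs_nonneg _) habs1 2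
    have h2 : (x 0).2 ^ 2 ≤ (r / (2 * sq1K)) ^ 2 := by
      rw [← sq_abs]; exact pow_le_pow_left₀ (abs_nonneg _) habs2 2
    have h3 : K * (x 0).2 ^ 2 ≤ K * (r / (2 * sq1K)) ^ 2 :=
      mul_le_mul_of_nonneg_left h2 hKpos
    have h4 : V 0 = (x 0).1 ^ 2 + K * (x 0).2 ^ 2 := by rw [hVdef]
    linarith only [h1, h3, h4.le, h4.ge, hρeq.le, hρeq.ge]
  -- exponential decay of V
  have key : ∀ s, 0 ≤ s → V s ≤ V 0 * Real.exp (-(lam/2) * s) := by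
    intro s hs
    have main : ∀ η, 0 < η → η ≤ r ^ 2 / 4 →
        V s ≤ (V 0 + η) * Real.exp (-(lam/2) * s) := by
      intro η hη hηr
      have hBd : ∀ u : ℝ, HasDerivAt (fun v => (V 0 + η) * Real.exp (-(lam/2) * v))
          (-(lam/2) * ((V 0 + η) * Real.exp (-(lam/2) * u))) u := by
        intro u
        have h1 : HasDerivAt (fun v : ℝ => -(lam/2) * v) (-(lam/2)) u := by
          simpa using (hasDerivAt_id u).const_mul (-(lam/2))
        have h2 := (Real.hasDerivAt_exp (-(lam/2) * u)).comp u h1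
        have h3 := h2.const_mul (V 0 + η)
        refine h3.congr_deriv ?_
        ring
      have hVB0 : V 0 ≤ (V 0 + η) * Real.exp (-(lam/2) * 0) := by
        rw [mul_zero, Real.exp_zero, mul_one]
        linarith only [hη]
      have bound : ∀ u ∈ Set.Ico (0:ℝ) s, V u = (V 0 + η) * Real.exp (-(lam/2) * u) →
          W u < -(lam/2) * ((V 0 + η) * Real.exp (-(lam/2) * u)) := by
        intro u hu hVB
        have hu0 : 0 ≤ u := hu.1
        have hVpos : 0 < V u := by
          rw [hVB]
          exact mul_pos (by linarith only [hVnonneg 0, hη]) (Real.exp_pos _)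
        have hexple : Real.exp (-(lam/2) * u) ≤ 1 := by
          rw [← Real.exp_zero]
          apply Real.exp_le_exp.2
          have h1 : 0 ≤ lam/2 * u := mul_nonneg (by linarith only [hlam]) hu0
          linarith only [h1]
        have hVur : V u ≤ r ^ 2 / 2 := by
          rw [hVB]
          have h1 : (V 0 + η) * Real.exp (-(lam/2) * u) ≤ (V 0 + η) * 1 :=
            mul_le_mul_of_nonneg_left hexple (by linarith only [hVnonneg 0, hη])
          linarith only [h1, hV0, hηr]
        have hr2 : V u ≤ r ^ 2 := by linarith only [hVur, sq_nonneg r]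
        have hb1 : |(x u).1| ≤ r := aux_abs_le (le_trans (hVlb1 u) hr2) hrpos.le
        have hb2 : |(x u).2| ≤ r := aux_abs_le (le_trans (hVlb2 u) hr2) hrpos.le
        have hc := hcore (x u) hb1 hb2
        have hVu : (x u).1 ^ 2 + K * (x u).2 ^ 2 = V u := by rw [hVdef]
        rw [hVu] at hc
        have hWu : W u = 2 * ((x u).1 * (F (x u)).1) + 2 * K * ((x u).2 * (F (x u)).2) := by
          rw [hWdef]
        rw [hWu, ← hVB]
        have h5 : 0 < lam/2 * V u := mul_pos (by linarith only [hlam]) hVpos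
        linarith only [hc, h5]
      have conc := image_le_of_deriv_right_lt_deriv_boundary
        (fun u hu => ((hVhas u hu.1).continuousAt).continuousWithinAt)
        (fun u hu => (hVhas u hu.1).hasDerivWithinAt)
        hVB0 hBd bound
      exact conc ⟨hs, le_rfl⟩
    rcases le_or_gt (V s) (V 0 * Real.exp (-(lam/2) * s)) with h | h
    · exact h
    · exfalso
      obtain ⟨η, hηdef⟩ : ∃ η : ℝ,
          η = min (r ^ 2 / 4) ((V s - V 0 * Real.exp (-(lam/2) * s)) / 2) := ⟨_, rfl⟩
      have hηpos : 0 < η := by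
        rw [hηdef]
        exact lt_min (by positivity) (by linarith only [h])
      have hm := main η hηpos (by rw [hηdef]; exact min_le_left _ _)
      have hηd : η ≤ (V s - V 0 * Real.exp (-(lam/2) * s)) / 2 := by
        rw [hηdef]; exact min_le_right _ _
      have hexple : Real.exp (-(lam/2) * s) ≤ 1 := by
        rw [← Real.exp_zero]
        apply Real.exp_le_exp.2
        have h1 : 0 ≤ lam/2 * s := mul_nonneg (by linarith only [hlam]) hs
        linarith only [h1]
      have hηe : η * Real.exp (-(lam/2) * s) ≤ η :=
        mul_le_of_le_one_right hηpos.le hexple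
      have hexpand : (V 0 + η) * Real.exp (-(lam/2) * s)
          = V 0 * Real.exp (-(lam/2) * s) + η * Real.exp (-(lam/2) * s) := by ring
      rw [hexpand] at hm
      linarith only [hm, hηe, hηd, h]
  -- conclude
  have hVt := key t ht
  have hnorm2 : ‖x t‖ ^ 2 ≤ V t := by
    have hmax : ‖x t‖ = max ‖(x t).1‖ ‖(x t).2‖ := rfl
    rw [hmax]
    rcases max_cases ‖(x t).1‖ ‖(x t).2‖ with ⟨heq', _⟩ | ⟨heq', _⟩ <;>
      rw [heq', Real.norm_eq_abs, sq_abs]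
    · exact hVlb1 t
    · exact hVlb2 t
  have hV0b : V 0 ≤ (1 + K) * ‖x 0‖ ^ 2 := by
    have h1 : (x 0).1 ^ 2 ≤ ‖x 0‖ ^ 2 := by
      rw [← sq_abs]
      apply pow_le_pow_left₀ (abs_nonneg _) _ 2
      rw [← Real.norm_eq_abs]; exact norm_fst_le (x 0)
    have h2 : (x 0).2 ^ 2 ≤ ‖x 0‖ ^ 2 := by
      rw [← sq_abs]
      apply pow_le_pow_left₀ (abs_nonneg _) _ 2
      rw [← Real.norm_eq_abs]; exact norm_snd_le (x 0)
    have h3 : K * (x 0).2 ^ 2 ≤ K * ‖x 0‖ ^ 2 := mul_le_mul_of_nonneg_left h2 hKpos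
    have h4 : V 0 = (x 0).1 ^ 2 + K * (x 0).2 ^ 2 := by rw [hVdef]
    linarith only [h1, h3, h4.le, h4.ge]
  have hrhs : (sq1K * Real.exp (-(lam/4) * t) * ‖x 0‖) ^ 2
      = (1 + K) * ‖x 0‖ ^ 2 * Real.exp (-(lam/2) * t) := by
    have hexp2 : Real.exp (-(lam/4) * t) ^ 2 = Real.exp (-(lam/2) * t) := by
      rw [sq, ← Real.exp_add]
      congr 1
      ring
    rw [mul_pow, mul_pow, hsqsq, hexp2]
    ring
  apply aux_le_of_sq_le_sq _ (norm_nonneg _) (by positivity)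
  rw [hrhs]
  calc ‖x t‖ ^ 2 ≤ V t := hnorm2
    _ ≤ V 0 * Real.exp (-(lam/2) * t) := hVt
    _ ≤ (1 + K) * ‖x 0‖ ^ 2 * Real.exp (-(lam/2) * t) :=
        mul_le_mul_of_nonneg_right hV0b (Real.exp_pos _).le
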